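/- Path-independence modulo endpoints: under the same hypotheses, if p and q are paths with ∂₀p = ∂₀q, and o is a diamond causally disjoint from both ∂₁p and ∂₁q, then z(p) A z(p)* = z(q) A z(q)* for all A ∈ R(o). -/

import Mathlib

/-- A 1-simplex of a poset `K`: two faces and a support dominating both. -/
structure OneSimplex (K : Type*) [PartialOrder K] where
  face0 : K
  face1 : K
  supp : K
  le0 : face0 ≤ supp
  le1 : face1 ≤ supp

/-- The reverse of a 1-simplex: same support, exchanged faces. -/
def OneSimplex.rev {K : Type*} [PartialOrder K] (b : OneSimplex K) : OneSimplex K :=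
  ⟨b.face1, b.face0, b.supp, b.le1, b.le0⟩

/-- The degenerate 1-simplex `σ₀ a` at a 0-simplex `a`. -/
def OneSimplex.degenerate {K : Type*} [PartialOrder K] (a : K) : OneSimplex K :=
  ⟨a, a, a, le_refl a, le_refl a⟩

/-- A 2-simplex of a poset `K`, presented by its three vertices, the supports of its
three faces, and its own support, with all required order relations. Its faces
`∂₀c, ∂₁c, ∂₂c` satisfy the simplicial identities by construction. -/
structure TwoSimplex (K : Type*) [PartialOrder K] where
  vstart : K
  vmid : K
  vend : K
  s0 : K
  s1 : K
  s2 : K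
  supp : K
  hs0 : s0 ≤ supp
  hs1 : s1 ≤ supp
  hs2 : s2 ≤ supp
  h0s : vmid ≤ s0
  h0e : vend ≤ s0
  h1s : vstart ≤ s1
  h1e : vend ≤ s1
  h2s : vstart ≤ s2
  h2e : vmid ≤ s2

/-- The face `∂₀c` (from `vmid` to `vend`). -/
def TwoSimplex.face0 {K : Type*} [PartialOrder K] (c : TwoSimplex K) : OneSimplex K :=
  ⟨c.vend, c.vmid, c.s0, c.h0e, c.h0s⟩

/-- The face `∂₁c` (from `vstart` to `vend`). -/
def TwoSimplex.face1 {K : Type*} [PartialOrder K] (c : TwoSimplex K) : OneSimplex K :=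
  ⟨c.vend, c.vstart, c.s1, c.h1e, c.h1s⟩

/-- The face `∂₂c` (from `vstart` to `vmid`). -/
def TwoSimplex.face2 {K : Type*} [PartialOrder K] (c : TwoSimplex K) : OneSimplex K :=
  ⟨c.vmid, c.vstart, c.s2, c.h2e, c.h2s⟩

/-- A path in the poset `K` from `x` to `y`: a nonempty composable string of
1-simplices, `∂₁` of the first being `x` and `∂₀` of the last being `y`. -/
inductive PPath (K : Type*) [PartialOrder K] : K → K → Type _
  | single (b : OneSimplex K) : PPath K b.face1 b.face0
  | cons (b : OneSimplex K) {x : K} (p : PPath K x b.face1) : PPath K x b.face0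

/-- Composition of paths: `q.comp p` first traverses `p`, then `q`. -/
def PPath.comp {K : Type*} [PartialOrder K] : ∀ {x y w : K}, PPath K y w → PPath K x y → PPath K x w
  | _, _, _, .single b, p => .cons b p
  | _, _, _, .cons b q, p => .cons b (q.comp p)

/-- The reverse of a path. -/
def PPath.rev {K : Type*} [PartialOrder K] : ∀ {x y : K}, PPath K x y → PPath K y x
  | _, _, .single b => .single b.rev
  | _, _, .cons b p => PPath.comp p.rev (.single b.rev)

/-- Multiplicative extension of a function on 1-simplices to paths:
`z(bₙ * ⋯ * b₁) = z(bₙ) ⋯ z(b₁)`. -/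
def PPath.eval {K : Type*} [PartialOrder K] {M : Type*} [Monoid M]
    (z : OneSimplex K → M) : ∀ {x y : K}, PPath K x y → M
  | _, _, .single b => z b
  | _, _, .cons b p => z b * p.eval z

/-- The support of the path is causally disjoint from `o` (every 1-simplex of the path
has support `⊥ o`). -/
def PPath.suppDisjoint {K : Type*} [PartialOrder K] (perp : K → K → Prop) (o : K) :
    ∀ {x y : K}, PPath K x y → Prop
  | _, _, .single b => perp b.supp o
  | _, _, .cons b p => perp b.supp o ∧ p.suppDisjoint perp o

/-- Homotopy of paths with the same endpoints: the equivalence relation generated by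
elementary deformations (replacing `∂₁c` by `∂₀c * ∂₂c` for a 2-simplex `c`), compatible
with composition. -/
inductive PHomotopic {K : Type*} [PartialOrder K] : ∀ {x y : K}, PPath K x y → PPath K x y → Prop
  | refl {x y : K} (p : PPath K x y) : PHomotopic p p
  | symm {x y : K} {p q : PPath K x y} : PHomotopic p q → PHomotopic q p
  | trans {x y : K} {p q r : PPath K x y} : PHomotopic p q → PHomotopic q r → PHomotopic p r
  | deform (c : TwoSimplex K) :
      PHomotopic (.single c.face1) ((PPath.single c.face0).comp (.single c.face2))
  | comp_congr {x y w : K} {q q' : PPath K y w} {p p' : PPath K x y} :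
      PHomotopic q q' → PHomotopic p p' → PHomotopic (q.comp p) (q'.comp p')

section Aux

variable {K : Type*} [PartialOrder K] {M : Type*} [Monoid M]

theorem PPath.eval_comp (z : OneSimplex K → M) :
    ∀ {x y w : K} (q : PPath K y w) (p : PPath K x y),
      (q.comp p).eval z = q.eval z * p.eval z
  | _, _, _, .single b, p => rfl
  | _, _, _, .cons b q, p => by
    show z b * (q.comp p).eval z = z b * q.eval z * p.eval z
    rw [PPath.eval_comp z q p, mul_assoc]

theorem PPath.eval_homotopic (z : OneSimplex K → M)
    (hzc : ∀ c : TwoSimplex K, z c.face0 * z c.face2 = z c.face1)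
    {x y : K} {p q : PPath K x y} (h : PHomotopic p q) : p.eval z = q.eval z := by
  induction h with
  | refl p => rfl
  | symm _ ih => exact ih.symm
  | trans _ _ ih1 ih2 => exact ih1.trans ih2
  | deform c => exact (hzc c).symm
  | comp_congr _ _ ih1 ih2 => simp [PPath.eval_comp, ih1, ih2]

end Aux

section AuxStar

variable {K : Type*} [PartialOrder K] {M : Type*} [Monoid M] [StarMul M]

theorem z_degenerate (z : OneSimplex K → M) (hzu : ∀ b : OneSimplex K, z b ∈ unitary M)
    (hzc : ∀ c : TwoSimplex K, z c.face0 * z c.face2 = z c.face1) (a : K) :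
    z (OneSimplex.degenerate a) = 1 := by
  have h := hzc ⟨a, a, a, a, a, a, a, le_refl a, le_refl a, le_refl a, le_refl a,
    le_refl a, le_refl a, le_refl a, le_refl a, le_refl a⟩
  have h2 : z (OneSimplex.degenerate a) * z (OneSimplex.degenerate a)
      = z (OneSimplex.degenerate a) := h
  have hu := (hzu (OneSimplex.degenerate a)).2
  calc z (OneSimplex.degenerate a)
      = z (OneSimplex.degenerate a) * z (OneSimplex.degenerate a)
        * star (z (OneSimplex.degenerate a)) := by rw [mul_assoc, hu, mul_one]
    _ = 1 := by rw [h2, hu]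

theorem z_rev (z : OneSimplex K → M) (hzu : ∀ b : OneSimplex K, z b ∈ unitary M)
    (hzc : ∀ c : TwoSimplex K, z c.face0 * z c.face2 = z c.face1) (b : OneSimplex K) :
    z b.rev = star (z b) := by
  have h := hzc ⟨b.face1, b.face0, b.face1, b.supp, b.face1, b.supp,
    b.supp, le_refl _, b.le1, le_refl _, b.le0, b.le1, le_refl _, le_refl _, b.le1, b.le0⟩
  have h2 : z b.rev * z b = z (OneSimplex.degenerate b.face1) := h
  rw [z_degenerate z hzu hzc] at h2
  calc z b.rev = z b.rev * (z b * star (z b)) := by rw [(hzu b).2, mul_one]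
    _ = star (z b) := by rw [← mul_assoc, h2, one_mul]

theorem PPath.eval_rev (z : OneSimplex K → M) (hzu : ∀ b : OneSimplex K, z b ∈ unitary M)
    (hzc : ∀ c : TwoSimplex K, z c.face0 * z c.face2 = z c.face1) :
    ∀ {x y : K} (p : PPath K x y), p.rev.eval z = star (p.eval z)
  | _, _, .single b => z_rev z hzu hzc b
  | _, _, .cons b p => by
    show (PPath.comp p.rev (.single b.rev)).eval z = star (z b * p.eval z)
    refine (PPath.eval_comp z p.rev (.single b.rev)).trans ?_
    rw [PPath.eval_rev z hzu hzc p, star_mul]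
    show star (p.eval z) * z b.rev = _
    rw [z_rev z hzu hzc b]

theorem PPath.eval_unitary (z : OneSimplex K → M)
    (hzu : ∀ b : OneSimplex K, z b ∈ unitary M) :
    ∀ {x y : K} (p : PPath K x y), p.eval z ∈ unitary M
  | _, _, .single b => hzu b
  | _, _, .cons b p => by
    show z b * p.eval z ∈ unitary M
    exact mul_mem (hzu b) (PPath.eval_unitary z hzu p)

end AuxStar

theorem star_comm_of_comm {M : Type*} [Monoid M] [StarMul M] {u A : M}
    (hu : u ∈ unitary M) (h : u * A = A * u) : star u * A = A * star u := by
  calc star u * A = star u * A * (u * star u) := by rw [hu.2, mul_one]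
    _ = star u * (A * u) * star u := by simp only [mul_assoc]
    _ = star u * (u * A) * star u := by rw [h]
    _ = star u * u * (A * star u) := by simp only [mul_assoc]
    _ = A * star u := by rw [hu.1, one_mul]

theorem cocycle_conjugation_path_independence {K : Type*} [PartialOrder K]
    {H : Type*} [NormedAddCommGroup H] [InnerProductSpace ℂ H] [CompleteSpace H]
    (perp : K → K → Prop)
    (hsymm : ∀ x y : K, perp x y → perp y x)
    (R : K → VonNeumannAlgebra H)
    (hiso : ∀ ⦃a b : K⦄, a ≤ b → (R a : Set (H →L[ℂ] H)) ⊆ (R b : Set (H →L[ℂ] H)))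
    (hhaag : ∀ a : K, (R a : Set (H →L[ℂ] H)) =
        ⋂ (b : K), ⋂ (_ : perp b a), ((R b).commutant : Set (H →L[ℂ] H)))
    (hccconn : ∀ (o x y : K), perp x o → perp y o →
        ∃ q : PPath K x y, q.suppDisjoint perp o)
    (hdef : ∀ (a o : K), perp a o → ∀ ℓ : PPath K a a,
        ∃ ℓ' : PPath K a a, PHomotopic ℓ ℓ' ∧ ℓ'.suppDisjoint perp o)
    (z : OneSimplex K → (H →L[ℂ] H))
    (hzu : ∀ b : OneSimplex K, z b ∈ unitary (H →L[ℂ] H))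
    (hzc : ∀ c : TwoSimplex K, z c.face0 * z c.face2 = z c.face1)
    (hloc : ∀ b : OneSimplex K, z b ∈ R b.supp) :
    ∀ (x x' w : K) (p : PPath K x w) (q : PPath K x' w) (o : K),
      perp x o → perp x' o → ∀ A ∈ R o,
        p.eval z * A * star (p.eval z) = q.eval z * A * star (q.eval z) := by
  intro x x' w p q o hx hx' A hA
  have hcA : ∀ c : OneSimplex K, perp c.supp o → z c * A = A * z c := by
    intro c hd
    have hA' : A ∈ (↑(R o) : Set (H →L[ℂ] H)) := hA
    rw [hhaag o] at hA'
    simp only [Set.mem_iInter, SetLike.mem_coe] at hA'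
    exact VonNeumannAlgebra.mem_commutant_iff.mp (hA' c.supp hd) _ (hloc c)
  have hcomm_disj : ∀ {a b : K} (r : PPath K a b), r.suppDisjoint perp o →
      r.eval z * A = A * r.eval z := by
    intro a b r
    induction r with
    | single c =>
      intro hd
      exact hcA c hd
    | cons c r ih =>
      intro hd
      have h1 := hcA c hd.1
      have h2 := ih hd.2
      show z c * r.eval z * A = A * (z c * r.eval z)
      rw [mul_assoc, h2, ← mul_assoc, h1, mul_assoc]
  have hcomm : ∀ {a b : K} (r : PPath K a b), perp a o → perp b o →
      r.eval z * A = A * r.eval z := by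
    intro a b r ha hb
    obtain ⟨s, hs⟩ := hccconn o b a hb ha
    obtain ⟨ℓ', hhom, hℓ'⟩ := hdef a o ha (s.comp r)
    have heq : s.eval z * r.eval z = ℓ'.eval z := by
      rw [← PPath.eval_comp]
      exact PPath.eval_homotopic z hzc hhom
    have hsA := hcomm_disj s hs
    have hℓA := hcomm_disj ℓ' hℓ'
    have hsu := PPath.eval_unitary z hzu s
    have hr : r.eval z = star (s.eval z) * ℓ'.eval z := by
      rw [← heq, ← mul_assoc, hsu.1, one_mul]
    have hsA' := star_comm_of_comm hsu hsA
    rw [hr, mul_assoc, hℓA, ← mul_assoc, hsA', mul_assoc]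
  have hkey := hcomm (PPath.comp q.rev p) hx hx'
  rw [PPath.eval_comp, PPath.eval_rev z hzu hzc] at hkey
  have hqu := PPath.eval_unitary z hzu q
  have hpu := PPath.eval_unitary z hzu p
  calc p.eval z * A * star (p.eval z)
      = q.eval z * star (q.eval z) * (p.eval z * A * star (p.eval z)) := by
        rw [hqu.2, one_mul]
    _ = q.eval z * (star (q.eval z) * p.eval z * A) * star (p.eval z) := by
        simp only [mul_assoc]
    _ = q.eval z * (A * (star (q.eval z) * p.eval z)) * star (p.eval z) := by
        rw [hkey]
    _ = q.eval z * A * star (q.eval z) * (p.eval z * star (p.eval z)) := by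
        simp only [mul_assoc]
    _ = q.eval z * A * star (q.eval z) := by rw [hpu.2, mul_one]
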